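/- Let m ≥ 1 and p, p' > m with p' = p + 4k·5^(m-1) for some integer k ≥ 1. Write 2^p ≡ x + a·10^m (mod 10^(m+1)) and 2^(p') ≡ x + a'·10^m (mod 10^(m+1)) where x < 10^m, 0 ≤ a, a' ≤ 9. If additionally 2^p ≡ x + a·10^m + c·10^(m+1) (mod 10^(m+2)) and 2^(p') ≡ x + a'·10^m + c'·10^(m+1) (mod 10^(m+2)) with c, c' both odd, then a ≡ a' (mod 4). -/

import Mathlib

theorem stmt_10 (m p k x a a' c c' : ℕ) (hm : 1 ≤ m) (hp : m < p) (hk : 1 ≤ k)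
    (hx : x < 10 ^ m) (ha : a ≤ 9) (ha' : a' ≤ 9) (hc : c ≤ 9) (hc' : c' ≤ 9)
    (h1 : 2 ^ p ≡ x + a * 10 ^ m [MOD 10 ^ (m + 1)])
    (h1' : 2 ^ (p + 4 * k * 5 ^ (m - 1)) ≡ x + a' * 10 ^ m [MOD 10 ^ (m + 1)])
    (h2 : 2 ^ p ≡ x + a * 10 ^ m + c * 10 ^ (m + 1) [MOD 10 ^ (m + 2)])
    (h2' : 2 ^ (p + 4 * k * 5 ^ (m - 1)) ≡ x + a' * 10 ^ m + c' * 10 ^ (m + 1)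
      [MOD 10 ^ (m + 2)])
    (hcodd : c % 2 = 1) (hc'odd : c' % 2 = 1) :
    a ≡ a' [MOD 4] := by
  rcases Nat.lt_or_ge p (m + 2) with hp2 | hp2
  · -- case p = m + 1 : contradiction with c odd
    exfalso
    have hpe : p = m + 1 := by omega
    have h2p : 2 ^ p < 10 ^ (m + 1) := by
      rw [hpe]; exact Nat.pow_lt_pow_left (by norm_num) (by omega)
    have hbig : (10:ℕ) ^ (m + 1) ≤ 10 ^ (m + 2) :=
      Nat.pow_le_pow_right (by norm_num) (by omega)
    have hpm : (0:ℕ) < 10 ^ m := Nat.pow_pos (by norm_num)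
    have e1 : (10:ℕ) ^ (m + 1) = 10 * 10 ^ m := by ring
    have e2 : (10:ℕ) ^ (m + 2) = 100 * 10 ^ m := by ring
    have hrhs : x + a * 10 ^ m + c * 10 ^ (m + 1) < 10 ^ (m + 2) := by
      have hc9 : c * 10 ^ (m + 1) ≤ 9 * 10 ^ (m + 1) :=
        Nat.mul_le_mul_right _ hc
      have ha9 : a * 10 ^ m ≤ 9 * 10 ^ m := Nat.mul_le_mul_right _ ha
      rw [e2]; rw [e1] at hc9 ⊢
      nlinarith
    have heq : 2 ^ p = x + a * 10 ^ m + c * 10 ^ (m + 1) := by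
      have h := h2
      unfold Nat.ModEq at h
      rwa [Nat.mod_eq_of_lt (lt_of_lt_of_le h2p hbig), Nat.mod_eq_of_lt hrhs] at h
    have hcm : c * 10 ^ (m + 1) < 1 * 10 ^ (m + 1) := by
      have : c * 10 ^ (m + 1) ≤ 2 ^ p := by omega
      omega
    have : c < 1 := lt_of_mul_lt_mul_right hcm (Nat.zero_le _)
    omega
  · set t := 4 * k * 5 ^ (m - 1) with ht
    -- 5^m divides 2^t - 1
    have hco : Nat.Coprime 2 (5 ^ m) := Nat.Coprime.pow_right m (by decide)
    have htval : Nat.totient (5 ^ m) = 4 * 5 ^ (m - 1) := by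
      rw [Nat.totient_prime_pow (by norm_num) hm]; ring
    have htot : (2:ℕ) ^ (4 * 5 ^ (m - 1)) ≡ 1 [MOD 5 ^ m] := by
      have := Nat.ModEq.pow_totient hco
      rwa [htval] at this
    have hmod : (2:ℕ) ^ t ≡ 1 [MOD 5 ^ m] := by
      have h := htot.pow k
      rw [← pow_mul, one_pow] at h
      have : t = 4 * 5 ^ (m - 1) * k := by rw [ht]; ring
      rwa [this]
    have h5 : ((5:ℤ)) ^ m ∣ 2 ^ t - 1 := by
      have := (Nat.modEq_iff_dvd (n := 5 ^ m)).mp hmod.symm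
      push_cast at this
      convert this using 2 <;> push_cast <;> ring
    -- key divisibility
    have hkey : (4 * 10 ^ m : ℤ) ∣ 2 ^ (p + t) - 2 ^ p := by
      have h2d : (2:ℤ) ^ (m + 2) ∣ 2 ^ p := pow_dvd_pow 2 hp2
      have e : (2:ℤ) ^ (p + t) - 2 ^ p = 2 ^ p * (2 ^ t - 1) := by ring
      have e2 : (4 * 10 ^ m : ℤ) = 2 ^ (m + 2) * 5 ^ m := by
        rw [show (10:ℤ) = 2 * 5 by norm_num, mul_pow]; ring
      rw [e, e2]
      exact mul_dvd_mul h2d h5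
    have hd2 := (Nat.modEq_iff_dvd (n := 10 ^ (m + 2))).mp h2
    have hd2' := (Nat.modEq_iff_dvd (n := 10 ^ (m + 2))).mp h2'
    push_cast at hd2 hd2'
    have hdvd : (4 * 10 ^ m : ℤ) ∣ (10:ℤ) ^ (m + 2) := ⟨25, by ring⟩
    have h4 : (4 * 10 ^ m : ℤ) ∣
        ((a':ℤ) - a) * 10 ^ m + ((c':ℤ) - c) * 10 ^ (m + 1) := by
      have hA := dvd_trans hdvd hd2'
      have hB := dvd_trans hdvd hd2
      have e : ((a':ℤ) - a) * 10 ^ m + ((c':ℤ) - c) * 10 ^ (m + 1)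
          = (((x:ℤ) + a' * 10 ^ m + c' * 10 ^ (m + 1)) - 2 ^ (p + t))
            - (((x:ℤ) + a * 10 ^ m + c * 10 ^ (m + 1)) - 2 ^ p)
            + (2 ^ (p + t) - 2 ^ p) := by ring
      rw [e]
      exact dvd_add (dvd_sub hA hB) hkey
    have h4' : (4:ℤ) ∣ (a':ℤ) - a + 10 * ((c':ℤ) - c) := by
      have hpow : (10:ℤ) ^ m ≠ 0 := by positivity
      have h' : (10:ℤ) ^ m * 4 ∣ 10 ^ m * ((a':ℤ) - a + 10 * ((c':ℤ) - c)) := by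
        convert h4 using 1 <;> ring
      exact (mul_dvd_mul_iff_left hpow).mp h'
    rw [Nat.modEq_iff_dvd]
    push_cast
    omega
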